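/- There exists a constant C > 0 such that for all n ≥ 1, E[S_{n+1} | S_1 > 0, S_2 > 0, ..., S_{n+1} > 0] ≤ C √(n+1), where S is the simple symmetric random walk. -/

import Mathlib

open MeasureTheory ProbabilityTheory Finset


open Finset

namespace CPW

def stp (x : Bool) : ℤ := if x then 1 else -1

def suff {m : ℕ} (b : Fin m → Bool) (t : ℕ) : ℤ :=
  ∑ k : Fin m, if t ≤ (k : ℕ) then stp (b k) else 0

def tot {m : ℕ} (b : Fin m → Bool) : ℤ := ∑ k, stp (b k)

def ups {m : ℕ} (b : Fin m → Bool) : ℕ := ∑ k, (if b k then 1 else 0)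

def good {m : ℕ} (b : Fin m → Bool) : Prop := ∀ t, t < m → 0 < suff b t

instance {m : ℕ} : DecidablePred (good (m := m)) := fun _ =>
  inferInstanceAs (Decidable (∀ t, t < m → _))

lemma suff_zero {m : ℕ} (b : Fin m → Bool) : suff b 0 = tot b := by
  simp [suff, tot]

lemma suff_cons_succ {m : ℕ} (x : Bool) (b : Fin m → Bool) (t : ℕ) :
    suff (Fin.cons x b) (t + 1) = suff b t := by
  rw [suff, Fin.sum_univ_succ]
  simp [suff, Fin.cons_succ, Nat.succ_le_succ_iff]

lemma tot_cons {m : ℕ} (x : Bool) (b : Fin m → Bool) :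
    tot (Fin.cons x b) = stp x + tot b := by
  rw [tot, Fin.sum_univ_succ]; simp [tot]

lemma ups_cons_true {m : ℕ} (b : Fin m → Bool) :
    ups (Fin.cons true b) = ups b + 1 := by
  rw [ups, Fin.sum_univ_succ]; simp [ups, Nat.add_comm]

lemma ups_cons_false {m : ℕ} (b : Fin m → Bool) :
    ups (Fin.cons false b) = ups b := by
  rw [ups, Fin.sum_univ_succ]; simp [ups]

lemma good_cons_iff {m : ℕ} (x : Bool) (b : Fin m → Bool) :
    good (Fin.cons x b) ↔ good b ∧ 0 < stp x + tot b := by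
  constructor
  · intro h
    refine ⟨fun t ht => ?_, ?_⟩
    · have := h (t + 1) (by omega)
      rwa [suff_cons_succ] at this
    · have := h 0 (by omega)
      rwa [suff_zero, tot_cons] at this
  · rintro ⟨hg, hx⟩ t ht
    match t with
    | 0 => rwa [suff_zero, tot_cons]
    | (t + 1) => rw [suff_cons_succ]; exact hg t (by omega)

lemma good_tot_pos {m : ℕ} (hm : 0 < m) {b : Fin m → Bool} (hb : good b) :
    0 < tot b := by
  have := hb 0 hm; rwa [suff_zero] at this

lemma sum_cons_split {m : ℕ} {M : Type*} [AddCommMonoid M]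
    (F : (Fin (m + 1) → Bool) → M) :
    ∑ b', F b' = (∑ b : Fin m → Bool, F (Fin.cons true b)) +
      ∑ b : Fin m → Bool, F (Fin.cons false b) := by
  rw [← (Fin.consEquiv (fun _ : Fin (m+1) => Bool)).sum_comp F]
  rw [Fintype.sum_prod_type]
  rw [Fintype.sum_bool]
  rfl

lemma tot_eq {m : ℕ} (b : Fin m → Bool) : tot b = 2 * (ups b : ℤ) - m := by
  have h : ∀ k, stp (b k) = 2 * (if b k then (1:ℤ) else 0) - 1 := by
    intro k; cases hk : b k <;> simp [stp, hk]
  rw [tot, Finset.sum_congr rfl fun k _ => h k, Finset.sum_sub_distrib, ← Finset.mul_sum]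
  rw [ups]
  push_cast [apply_ite (fun n : ℕ => (n : ℤ))]
  simp

/-- Claim A: the sum of endpoints over good paths. -/
lemma sum_tot_good : ∀ m : ℕ, 1 ≤ m →
    ∑ b ∈ univ.filter (good (m := m)), tot b = 2 ^ (m - 1) := by
  intro m
  induction m with
  | zero => omega
  | succ m ih =>
    intro _
    rcases Nat.eq_zero_or_pos m with hm | hm
    · subst hm
      rw [Finset.sum_filter, sum_cons_split]
      simp [good_cons_iff, tot_cons, stp, good, tot]
      norm_num [suff, stp]
    · rw [Finset.sum_filter, sum_cons_split]
      have h1 : ∀ b : Fin m → Bool,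
          (if good (Fin.cons true b) then tot (Fin.cons true b) else 0) =
          (if good b then tot b + 1 else 0) := by
        intro b
        simp only [good_cons_iff, tot_cons]
        by_cases hg : good b
        · have := good_tot_pos hm hg
          have h0 : (0:ℤ) < stp true + tot b := by simp [stp]; omega
          rw [if_pos ⟨hg, h0⟩, if_pos hg]
          simp [stp]; ring
        · simp [hg]
      have h2 : ∀ b : Fin m → Bool,
          (if good (Fin.cons false b) then tot (Fin.cons false b) else 0) =
          (if good b then tot b - 1 else 0) := by
        intro b
        simp only [good_cons_iff, tot_cons]
        by_cases hg : good b
        · have := good_tot_pos hm hg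
          simp only [hg, true_and, stp, if_neg Bool.false_ne_true]
          by_cases h2 : (0:ℤ) < -1 + tot b
          · rw [if_pos h2, if_pos trivial]; ring
          · rw [if_neg h2, if_pos trivial]; omega
        · simp [hg]
      rw [Finset.sum_congr rfl (fun b _ => h1 b), Finset.sum_congr rfl (fun b _ => h2 b)]
      rw [← Finset.sum_add_distrib]
      have : ∀ b : Fin m → Bool,
          ((if good b then tot b + 1 else 0) + (if good b then tot b - 1 else 0)) =
          2 * (if good b then tot b else 0) := by
        intro b; by_cases hg : good b <;> simp [hg] <;> ring
      rw [Finset.sum_congr rfl (fun b _ => this b), ← Finset.mul_sum, ← Finset.sum_filter,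
        ih hm]
      have : m + 1 - 1 = (m - 1) + 1 := by omega
      rw [this, pow_succ]
      ring

def Nc (m u : ℕ) : ℕ := (univ.filter (fun b : Fin m → Bool => good b ∧ ups b = u)).card

lemma ups_le {m : ℕ} (b : Fin m → Bool) : ups b ≤ m := by
  rw [ups]
  calc (∑ k : Fin m, if b k then 1 else 0) ≤ ∑ _k : Fin m, 1 :=
        Finset.sum_le_sum (fun k _ => by split <;> omega)
    _ = m := by simp

lemma good_ups {m : ℕ} (hm : 0 < m) {b : Fin m → Bool} (hb : good b) :
    m + 1 ≤ 2 * ups b := by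
  have h1 := good_tot_pos hm hb
  have h2 := tot_eq b
  omega

lemma Nc_zero {m u : ℕ} (hm : 0 < m) (h : 2 * u ≤ m) : Nc m u = 0 := by
  rw [Nc, Finset.card_eq_zero, Finset.filter_eq_empty_iff]
  rintro b - ⟨hg, hu⟩
  have := good_ups hm hg
  omega

lemma Nc_rec {m u : ℕ} (hm : 0 < m) (h : m ≤ 2 * u) :
    Nc (m + 1) (u + 1) = Nc m u + Nc m (u + 1) := by
  rw [Nc, Finset.card_filter, sum_cons_split]
  have h1 : ∀ b : Fin m → Bool,
      (if good (Fin.cons true b) ∧ ups (Fin.cons true b) = u + 1 then (1:ℕ) else 0) =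
      (if good b ∧ ups b = u then 1 else 0) := by
    intro b
    congr 1
    simp only [good_cons_iff, ups_cons_true, eq_iff_iff]
    constructor
    · rintro ⟨⟨hg, -⟩, hu⟩
      exact ⟨hg, by omega⟩
    · rintro ⟨hg, hu⟩
      have := good_tot_pos hm hg
      exact ⟨⟨hg, by simp only [stp, if_true]; omega⟩, by omega⟩
  have h2 : ∀ b : Fin m → Bool,
      (if good (Fin.cons false b) ∧ ups (Fin.cons false b) = u + 1 then (1:ℕ) else 0) =
      (if good b ∧ ups b = u + 1 then 1 else 0) := by
    intro b
    congr 1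
    simp only [good_cons_iff, ups_cons_false, eq_iff_iff]
    constructor
    · rintro ⟨⟨hg, -⟩, hu⟩
      exact ⟨hg, hu⟩
    · rintro ⟨hg, hu⟩
      have h3 := tot_eq b
      refine ⟨⟨hg, ?_⟩, hu⟩
      simp only [stp, Bool.false_eq_true, if_false]
      omega
  rw [Finset.sum_congr rfl fun b _ => h1 b, Finset.sum_congr rfl fun b _ => h2 b,
    ← Finset.card_filter, ← Finset.card_filter]
  rfl

lemma good_nil (b : Fin 0 → Bool) : good b := fun t ht => absurd ht (Nat.not_lt_zero t)

lemma tot_nil (b : Fin 0 → Bool) : tot b = 0 := by simp [tot]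

lemma ups_nil (b : Fin 0 → Bool) : ups b = 0 := by simp [ups]

lemma Nc_one (u : ℕ) : Nc 1 u = if u = 1 then 1 else 0 := by
  rw [Nc, Finset.card_filter, sum_cons_split, Fintype.sum_unique, Fintype.sum_unique]
  have hg : ∀ b : Fin 0 → Bool, good (Fin.cons true b) := fun b =>
    (good_cons_iff _ _).2 ⟨good_nil _, by rw [tot_nil]; simp [stp]⟩
  have hng : ∀ b : Fin 0 → Bool, ¬ good (Fin.cons false b) := by
    intro b
    rw [good_cons_iff]
    rintro ⟨-, h⟩
    rw [tot_nil] at h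
    simp [stp] at h
  have hup : ∀ b : Fin 0 → Bool, ups (Fin.cons true b) = 1 := fun b => by
    rw [ups_cons_true, ups_nil]
  rcases eq_or_ne u 1 with h | h
  · subst h
    rw [if_pos ⟨hg _, hup _⟩, if_neg (fun hc : _ ∧ _ => hng _ hc.1)]
    norm_num
  · rw [if_neg (fun hc : _ ∧ _ => h (hc.2.symm.trans (hup _))),
      if_neg (fun hc : _ ∧ _ => hng _ hc.1), if_neg h]

lemma Nc_eq : ∀ m u : ℕ, m ≤ 2 * u →
    (Nc (m + 1) (u + 1) : ℤ) = (m.choose u : ℤ) - m.choose (u + 1) := by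
  intro m
  induction m with
  | zero =>
    intro u _
    rw [Nc_one]
    rcases Nat.eq_zero_or_pos u with hu | hu
    · subst hu; simp
    · rw [if_neg (by omega), Nat.choose_eq_zero_of_lt (by omega),
        Nat.choose_eq_zero_of_lt (by omega)]
      simp
  | succ m ih =>
    intro u hu
    rw [Nc_rec (by omega) hu]
    push_cast
    have h2 := ih u (by omega)
    obtain ⟨v, rfl⟩ : ∃ v, u = v + 1 := ⟨u - 1, by omega⟩
    rw [h2, Nat.choose_succ_succ m (v+1), Nat.choose_succ_succ m v]
    by_cases hmv : m ≤ 2 * v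
    · rw [ih v hmv]
      push_cast
      simp only [Nat.succ_eq_add_one]
      ring
    · have hm : m = 2 * v + 1 := by omega
      rw [show Nc (m+1) (v+1) = 0 from Nc_zero (by omega) (by omega)]
      have hsymm : m.choose v = m.choose (v + 1) := by
        have := Nat.choose_symm (n := m) (k := v + 1) (by omega)
        rw [show m - (v+1) = v by omega] at this
        omega
      push_cast
      simp only [Nat.succ_eq_add_one]
      omega
def G (m : ℕ) : ℕ := (univ.filter (good (m := m))).card

lemma G_eq (M : ℕ) : (G (M + 1) : ℤ) = (M.choose ((M + 1) / 2) : ℤ) := by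
  have H : ∀ b ∈ univ.filter (good (m := M + 1)),
      ups b ∈ Icc ((M + 1) / 2 + 1) (M + 1) := by
    intro b hb
    rw [Finset.mem_filter] at hb
    have h1 := good_ups (Nat.succ_pos M) hb.2
    have h2 := ups_le b
    rw [Finset.mem_Icc]
    omega
  have hfib : G (M + 1) = ∑ u ∈ Icc ((M + 1) / 2 + 1) (M + 1), Nc (M + 1) u := by
    rw [G, Finset.card_eq_sum_card_fiberwise H]
    refine Finset.sum_congr rfl fun u _ => ?_
    rw [Nc, Finset.filter_filter]
  rw [hfib]
  push_cast
  rw [← Finset.Ico_add_one_right_eq_Icc, Finset.sum_Ico_eq_sum_range]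
  have hterm : ∀ i ∈ Finset.range (M + 1 + 1 - ((M + 1) / 2 + 1)),
      (Nc (M + 1) ((M + 1) / 2 + 1 + i) : ℤ) =
        (fun j => (M.choose ((M + 1) / 2 + j) : ℤ)) i -
          (fun j => (M.choose ((M + 1) / 2 + j) : ℤ)) (i + 1) := by
    intro i _
    rw [show (M + 1) / 2 + 1 + i = ((M + 1) / 2 + i) + 1 from by omega,
      Nc_eq M ((M + 1) / 2 + i) (by omega)]
    simp [Nat.add_assoc]
  rw [Finset.sum_congr rfl hterm, Finset.sum_range_sub'
    (fun j => (M.choose ((M + 1) / 2 + j) : ℤ))]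
  have hz : ∀ j, M + 1 ≤ j → (M.choose j : ℤ) = 0 := fun j hj => by
    rw [Nat.choose_eq_zero_of_lt (by omega)]
    rfl
  rw [hz ((M + 1) / 2 + (M + 1 + 1 - ((M + 1) / 2 + 1))) (by omega), Nat.add_zero, sub_zero]

lemma central_lb : ∀ k : ℕ, 1 ≤ k → (4 : ℝ) ^ k ≤ 2 * Real.sqrt k * (Nat.centralBinom k : ℝ) := by
  intro k
  induction k with
  | zero => omega
  | succ k ih =>
    intro _
    rcases Nat.eq_zero_or_pos k with rfl | hk
    · norm_num [Nat.centralBinom]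
    · have h1 := ih hk
      have hrec : ((k : ℝ) + 1) * (Nat.centralBinom (k + 1) : ℝ) =
          2 * (2 * (k : ℝ) + 1) * (Nat.centralBinom k : ℝ) := by
        exact_mod_cast congrArg (Nat.cast : ℕ → ℝ) (Nat.succ_mul_centralBinom_succ k)
      have hsq : 2 * Real.sqrt k * ((k : ℝ) + 1) ≤ (2 * (k : ℝ) + 1) * Real.sqrt ((k : ℝ) + 1) := by
        have hk0 : (0:ℝ) ≤ (k:ℝ) := by positivity
        have h2 : (2 * Real.sqrt k * ((k : ℝ) + 1)) ^ 2 ≤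
            ((2 * (k : ℝ) + 1) * Real.sqrt ((k : ℝ) + 1)) ^ 2 := by
          rw [mul_pow, mul_pow, mul_pow, Real.sq_sqrt hk0, Real.sq_sqrt (by positivity)]
          nlinarith [hk0]
        exact le_of_pow_le_pow_left₀ two_ne_zero (by positivity) h2
      have hcb : (0:ℝ) ≤ (Nat.centralBinom k : ℝ) := by positivity
      have hkpos : (0:ℝ) < (k:ℝ) + 1 := by positivity
      rw [← mul_le_mul_iff_right₀ hkpos]
      push_cast
      calc ((k:ℝ) + 1) * 4 ^ (k + 1) = 4 * ((k:ℝ)+1) * 4 ^ k := by ring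
        _ ≤ 4 * ((k:ℝ)+1) * (2 * Real.sqrt k * (Nat.centralBinom k : ℝ)) := by
            have : (0:ℝ) ≤ 4 * ((k:ℝ)+1) := by positivity
            exact mul_le_mul_of_nonneg_left h1 this
        _ = (2 * Real.sqrt k * ((k:ℝ)+1)) * (4 * (Nat.centralBinom k : ℝ)) := by ring
        _ ≤ ((2 * (k : ℝ) + 1) * Real.sqrt ((k : ℝ) + 1)) * (4 * (Nat.centralBinom k : ℝ)) := by
            refine mul_le_mul_of_nonneg_right hsq (by positivity)
        _ = ((k:ℝ) + 1) * (2 * Real.sqrt ((k:ℝ)+1) * (Nat.centralBinom (k+1) : ℝ)) := by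
            rw [show ((k:ℝ) + 1) * (2 * Real.sqrt ((k:ℝ)+1) * (Nat.centralBinom (k+1) : ℝ)) =
              2 * Real.sqrt ((k:ℝ)+1) * (((k:ℝ)+1) * (Nat.centralBinom (k+1) : ℝ)) from by ring,
              hrec]
            ring

lemma comb_bound (m : ℕ) (hm : 2 ≤ m) :
    (2 : ℝ) ^ (m - 1) ≤ 2 * Real.sqrt m * ((m - 1).choose (m / 2) : ℝ) := by
  rcases Nat.even_or_odd m with ⟨k, hk⟩ | ⟨k, hk⟩
  · have hk1 : 1 ≤ k := by omega
    obtain ⟨j, rfl⟩ : ∃ j, k = j + 1 := ⟨k - 1, by omega⟩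
    set k := j + 1 with hkj
    have hchoose : Nat.centralBinom k = 2 * ((m - 1).choose (m / 2)) := by
      have e1 : m / 2 = j + 1 := by omega
      have e2 : m - 1 = 2 * j + 1 := by omega
      rw [e1, e2, Nat.centralBinom_eq_two_mul_choose,
        show 2 * k = (2 * j + 1) + 1 from by omega, hkj, Nat.choose_succ_succ]
      have hsymm : (2 * j + 1).choose j = (2 * j + 1).choose (j + 1) := by
        have := Nat.choose_symm (n := 2 * j + 1) (k := j + 1) (by omega)
        rw [show 2 * j + 1 - (j + 1) = j from by omega] at this
        omega
      simp only [Nat.succ_eq_add_one]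
      omega
    have h4 := central_lb k hk1
    have hcast : (Nat.centralBinom k : ℝ) = 2 * ((m - 1).choose (m / 2) : ℝ) := by
      exact_mod_cast congrArg (Nat.cast : ℕ → ℝ) hchoose
    have hsqle : Real.sqrt k ≤ Real.sqrt m :=
      Real.sqrt_le_sqrt (by exact_mod_cast (by omega : k ≤ m))
    have hcbpos : (0 : ℝ) ≤ (Nat.centralBinom k : ℝ) := by positivity
    have step : 2 * Real.sqrt k * (Nat.centralBinom k : ℝ) ≤
        2 * Real.sqrt m * (Nat.centralBinom k : ℝ) := by
      apply mul_le_mul_of_nonneg_right _ hcbpos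
      linarith
    have hfin := h4.trans step
    have e4 : (4 : ℝ) ^ k = 2 * (2 : ℝ) ^ (m - 1) := by
      have h24 : (4 : ℝ) ^ k = (2 : ℝ) ^ (2 * k) := by
        rw [pow_mul]; norm_num
      rw [h24, show 2 * k = (m - 1) + 1 from by omega, pow_succ]
      ring
    rw [e4, hcast] at hfin
    nlinarith [hfin, Real.sqrt_nonneg (m : ℝ), (by positivity : (0:ℝ) ≤ ((m - 1).choose (m / 2) : ℝ))]
  · have hk1 : 1 ≤ k := by omega
    have hchoose : (m - 1).choose (m / 2) = Nat.centralBinom k := by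
      rw [show m - 1 = 2 * k from by omega, show m / 2 = k from by omega]
      rfl
    have h4 := central_lb k hk1
    have hsqle : Real.sqrt k ≤ Real.sqrt m :=
      Real.sqrt_le_sqrt (by exact_mod_cast (by omega : k ≤ m))
    have hcbpos : (0 : ℝ) ≤ (Nat.centralBinom k : ℝ) := by positivity
    have step : 2 * Real.sqrt k * (Nat.centralBinom k : ℝ) ≤
        2 * Real.sqrt m * (Nat.centralBinom k : ℝ) := by
      apply mul_le_mul_of_nonneg_right _ hcbpos
      linarith
    have e4 : (2 : ℝ) ^ (m - 1) = (4 : ℝ) ^ k := by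
      rw [show m - 1 = 2 * k from by omega, pow_mul]; norm_num
    rw [hchoose]
    push_cast
    rw [e4]
    exact h4.trans step

lemma suff_eq_filter {m : ℕ} (b : Fin m → Bool) (t : ℕ) :
    suff b t = ∑ k ∈ univ.filter (fun k : Fin m => t ≤ (k : ℕ)), stp (b k) := by
  rw [suff, Finset.sum_filter]

end CPW

open MeasureTheory ProbabilityTheory Finset

/-- There is `C > 0` such that for all `n ≥ 1`,
`E[S_{n+1} | S_1 > 0, …, S_{n+1} > 0] ≤ C √(n+1)`, where the conditional
expectation given the event is the integral over the event divided by its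
probability. -/
theorem conditioned_positive_walk_mean
    {Ω : Type*} [MeasureSpace Ω] [IsProbabilityMeasure (ℙ : Measure Ω)]
    (X : ℕ → Ω → ℤ) (hmeas : ∀ i, Measurable (X i))
    (hindep : iIndepFun X ℙ)
    (hdist : ∀ i, ℙ {ω | X i ω = 1} = 1/2 ∧ ℙ {ω | X i ω = -1} = 1/2)
    (S : ℕ → Ω → ℤ)
    (hS : ∀ n ω, S n ω = ∑ i ∈ Finset.Icc 1 n, X i ω) :
    ∃ C : ℝ, 0 < C ∧ ∀ n : ℕ, 1 ≤ n →
      (∫ ω in {ω | ∀ i ∈ Finset.Icc 1 (n + 1), 0 < S i ω}, (S (n + 1) ω : ℝ) ∂ℙ) /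
          (ℙ {ω | ∀ i ∈ Finset.Icc 1 (n + 1), 0 < S i ω}).toReal
        ≤ C * Real.sqrt (n + 1) := by
  classical
  refine ⟨2, by norm_num, ?_⟩
  intro n hn
  set m : ℕ := n + 1 with hmdef
  have hm1 : 1 ≤ m := by omega
  have hm2 : 2 ≤ m := by omega
  clear_value m
  set A : Set Ω := {ω | ∀ i ∈ Finset.Icc 1 m, 0 < S i ω} with hA
  set C : (Fin m → Bool) → Set Ω :=
    fun b => ⋂ k : Fin m, {ω | X (m - (k : ℕ)) ω = CPW.stp (b k)} with hCdef
  have hCmeas : ∀ b, MeasurableSet (C b) := fun b =>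
    MeasurableSet.iInter fun k => (hmeas _) (measurableSet_singleton _)
  have hSmeas : ∀ i, Measurable (S i) := by
    intro i
    have h : S i = fun ω => ∑ j ∈ Finset.Icc 1 i, X j ω := funext fun ω => hS i ω
    rw [h]
    exact Finset.measurable_sum _ fun j _ => hmeas j
  have hAmeas : MeasurableSet A := by
    have h : A = ⋂ i ∈ Finset.Icc 1 m, (S i) ⁻¹' (Set.Ioi 0) := by
      ext ω
      simp [hA, Set.mem_iInter]
    rw [h]
    exact MeasurableSet.biInter (Finset.Icc 1 m).countable_toSet
      (fun i _ => hSmeas i measurableSet_Ioi)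
  -- probability of each cylinder
  have hprob : ∀ b, ℙ (C b) = (1/2 : ENNReal) ^ m := by
    intro b
    set ε : ℕ → ℤ := fun j => if h : m - j < m then CPW.stp (b ⟨m - j, h⟩) else 1 with hε
    have hCeq : C b = ⋂ j ∈ Finset.Icc 1 m, X j ⁻¹' {ε j} := by
      ext ω
      simp only [hCdef, Set.mem_iInter, Set.mem_preimage, Set.mem_singleton_iff,
        Finset.mem_Icc]
      constructor
      · intro h j hj
        have hlt : m - j < m := by omega
        rw [hε]
        simp only
        rw [dif_pos hlt]
        have h2 := h ⟨m - j, hlt⟩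
        simpa [show m - (m - j) = j from by omega] using h2
      · intro h k
        have hklt := k.isLt
        have h2 := h (m - (k : ℕ)) ⟨by omega, by omega⟩
        rw [hε] at h2
        simp only at h2
        have hlt : m - (m - (k : ℕ)) < m := by omega
        rw [dif_pos hlt] at h2
        have he : (⟨m - (m - (k : ℕ)), hlt⟩ : Fin m) = k := Fin.ext (by simp; omega)
        rwa [he] at h2
    rw [hCeq, hindep.measure_inter_preimage_eq_mul (Finset.Icc 1 m)
      (fun j _ => measurableSet_singleton _)]
    have hfac : ∀ j ∈ Finset.Icc 1 m, ℙ (X j ⁻¹' {ε j}) = (1/2 : ENNReal) := by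
      intro j hj
      rw [Finset.mem_Icc] at hj
      have hlt : m - j < m := by omega
      rw [hε]
      simp only
      rw [dif_pos hlt]
      cases hb : b ⟨m - j, hlt⟩
      · have : ℙ (X j ⁻¹' {CPW.stp false}) = ℙ {ω | X j ω = -1} := rfl
        rw [this, (hdist j).2]
      · have : ℙ (X j ⁻¹' {CPW.stp true}) = ℙ {ω | X j ω = 1} := rfl
        rw [this, (hdist j).1]
    rw [Finset.prod_congr rfl hfac, Finset.prod_const, Nat.card_Icc]
    norm_num
  -- disjointness
  have hdisj : ∀ b b' : (Fin m → Bool), b ≠ b' → Disjoint (C b) (C b') := by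
    intro b b' hne
    obtain ⟨k, hk⟩ := Function.ne_iff.1 hne
    rw [Set.disjoint_left]
    intro ω h1 h2
    have e1 := Set.mem_iInter.1 h1 k
    have e2 := Set.mem_iInter.1 h2 k
    rw [Set.mem_setOf_eq] at e1 e2
    apply hk
    have h3 := e1.symm.trans e2
    cases hbk : b k <;> cases hbk' : b' k <;> simp_all [CPW.stp]
  -- null complement
  have hDnull : ∀ j, ℙ (({ω | X j ω = 1} ∪ {ω | X j ω = -1})ᶜ) = 0 := by
    intro j
    have hmeas1 : MeasurableSet {ω | X j ω = 1} := hmeas j (measurableSet_singleton 1)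
    have hmeas2 : MeasurableSet {ω | X j ω = -1} := hmeas j (measurableSet_singleton (-1))
    have hd : Disjoint {ω | X j ω = 1} {ω | X j ω = -1} := by
      rw [Set.disjoint_left]
      intro ω h1 h2
      rw [Set.mem_setOf_eq] at h1 h2
      omega
    have hu : ℙ ({ω | X j ω = 1} ∪ {ω | X j ω = -1}) = 1 := by
      rw [measure_union hd hmeas2, (hdist j).1, (hdist j).2, ENNReal.add_halves]
    rw [measure_compl (hmeas1.union hmeas2) (measure_ne_top _ _), hu]
    simp
  have hcover : (⋂ j ∈ Finset.Icc 1 m, ({ω | X j ω = 1} ∪ {ω | X j ω = -1})) ⊆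
      ⋃ b : Fin m → Bool, C b := by
    intro ω hω
    simp only [Set.mem_iInter, Set.mem_union, Set.mem_setOf_eq, Finset.mem_Icc] at hω
    refine Set.mem_iUnion.2 ⟨fun k => decide (X (m - (k : ℕ)) ω = 1), ?_⟩
    refine Set.mem_iInter.2 fun k => ?_
    have hklt := k.isLt
    rcases hω (m - (k : ℕ)) ⟨by omega, by omega⟩ with h | h
    · simp [CPW.stp, h]
    · have hne : ¬ (X (m - (k : ℕ)) ω = 1) := by rw [h]; norm_num
      simp [CPW.stp, hne, h]
  have hUnull : ℙ ((⋃ b : Fin m → Bool, C b)ᶜ) = 0 := by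
    refine measure_mono_null ?_ ((measure_biUnion_null_iff
      (Finset.Icc 1 m).countable_toSet).2 fun j _ => hDnull j)
    calc (⋃ b : Fin m → Bool, C b)ᶜ
        ⊆ (⋂ j ∈ Finset.Icc 1 m, ({ω | X j ω = 1} ∪ {ω | X j ω = -1}))ᶜ :=
          Set.compl_subset_compl.2 hcover
      _ = ⋃ j ∈ Finset.Icc 1 m, (({ω | X j ω = 1} ∪ {ω | X j ω = -1})ᶜ) := by
          rw [Set.compl_iInter₂]
  -- walk values on cylinders
  have hSC : ∀ b, ∀ ω ∈ C b, ∀ i ∈ Finset.Icc 1 m, S i ω = CPW.suff b (m - i) := by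
    intro b ω hω i hi
    rw [Finset.mem_Icc] at hi
    have hX : ∀ k : Fin m, X (m - (k : ℕ)) ω = CPW.stp (b k) := fun k =>
      Set.mem_iInter.1 hω k
    rw [hS, CPW.suff_eq_filter]
    refine Finset.sum_bij' (fun j hj => (⟨m - j, ?_⟩ : Fin m))
      (fun k hk => m - (k : ℕ)) ?_ ?_ ?_ ?_ ?_
    · rw [Finset.mem_Icc] at hj
      omega
    · intro a ha
      rw [Finset.mem_Icc] at ha
      simp only [Finset.mem_filter, Finset.mem_univ, true_and]
      exact (by omega : m - i ≤ m - a)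
    · intro a ha
      simp only [Finset.mem_filter, Finset.mem_univ, true_and] at ha
      have := a.isLt
      rw [Finset.mem_Icc]
      show 1 ≤ m - (a : ℕ) ∧ m - (a : ℕ) ≤ i
      omega
    · intro a ha
      rw [Finset.mem_Icc] at ha
      exact (by omega : m - (m - a) = a)
    · intro a ha
      simp only [Finset.mem_filter, Finset.mem_univ, true_and] at ha
      have := a.isLt
      exact Fin.ext (by simp; omega)
    · intro a ha
      rw [Finset.mem_Icc] at ha
      have h2 := hX ⟨m - a, by omega⟩
      simp only at h2
      rwa [show m - (m - a) = a from by omega] at h2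
  -- intersection with the event
  have hAC : ∀ b, A ∩ C b = if CPW.good b then C b else ∅ := by
    intro b
    split_ifs with hg
    · rw [Set.inter_eq_right]
      intro ω hω
      rw [hA, Set.mem_setOf_eq]
      intro i hi
      have h1 := hSC b ω hω i hi
      rw [Finset.mem_Icc] at hi
      rw [h1]
      exact hg (m - i) (by omega)
    · rw [Set.eq_empty_iff_forall_notMem]
      rintro ω ⟨hωA, hωC⟩
      apply hg
      intro t ht
      have h1 := hSC b ω hωC (m - t) (Finset.mem_Icc.2 ⟨by omega, by omega⟩)
      rw [show m - (m - t) = t from by omega] at h1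
      rw [← h1]
      exact hωA (m - t) (Finset.mem_Icc.2 ⟨by omega, by omega⟩)
  -- measure of A
  have hPA : ℙ A = (CPW.G m : ENNReal) * (1/2 : ENNReal) ^ m := by
    rw [← measure_inter_conull hUnull, Set.inter_iUnion, measure_iUnion
      (fun b b' hne => ((hdisj b b' hne).mono Set.inter_subset_right Set.inter_subset_right))
      (fun b => hAmeas.inter (hCmeas b))]
    rw [tsum_fintype]
    have h1 : ∀ b ∈ (Finset.univ : Finset (Fin m → Bool)), ℙ (A ∩ C b) =
        (if CPW.good b then (1/2 : ENNReal)^m else 0) := by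
      intro b _
      rw [hAC b]
      split_ifs with hg
      · exact hprob b
      · exact measure_empty
    rw [Finset.sum_congr rfl h1, ← Finset.sum_filter, Finset.sum_const, nsmul_eq_mul]
    rfl
  -- the integral
  have hAeq : ((A ∩ (⋃ b : Fin m → Bool, C b) : Set Ω)) =ᵐ[ℙ] A := by
    have h1 : ((⋃ b : Fin m → Bool, C b : Set Ω)) =ᵐ[ℙ] (Set.univ : Set Ω) :=
      MeasureTheory.ae_eq_univ.2 hUnull
    have h2 : ((A ∩ (⋃ b : Fin m → Bool, C b) : Set Ω))
        =ᵐ[ℙ] ((A ∩ Set.univ : Set Ω)) :=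
          MeasureTheory.ae_eq_set_inter (Filter.EventuallyEq.refl _ _) h1
    rwa [Set.inter_univ] at h2
  have hIntReal : (∫ ω in A, (S m ω : ℝ) ∂ℙ) = (2:ℝ)^(m-1) * (1/2:ℝ)^m := by
    rw [← setIntegral_congr_set hAeq]
    have hrw : (A ∩ (⋃ b : Fin m → Bool, C b)) =
        ⋃ b ∈ (Finset.univ : Finset (Fin m → Bool)), A ∩ C b := by
      ext ω
      simp [Set.mem_iUnion]
    rw [hrw]
    have hval : ∀ b : Fin m → Bool, ∀ ω ∈ C b, (S m ω : ℝ) = ((CPW.tot b : ℤ) : ℝ) := by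
      intro b ω hω
      have h1 := hSC b ω hω m (Finset.mem_Icc.2 ⟨hm1, le_refl m⟩)
      rw [Nat.sub_self, CPW.suff_zero] at h1
      exact_mod_cast congrArg (Int.cast : ℤ → ℝ) h1
    have hintOn : ∀ b ∈ (Finset.univ : Finset (Fin m → Bool)),
        IntegrableOn (fun ω => (S m ω : ℝ)) (A ∩ C b) ℙ := by
      intro b _
      rw [hAC b]
      split_ifs with hg
      · exact (MeasureTheory.integrableOn_const
          (measure_ne_top _ _)).congr_fun
          (fun ω hω => (hval b ω hω).symm) (hCmeas b)
      · simp
    rw [integral_biUnion_finset Finset.univ (fun b _ => hAmeas.inter (hCmeas b))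
      (fun b _ b' _ hne => ((hdisj b b' hne).mono Set.inter_subset_right
        Set.inter_subset_right)) hintOn]
    have h2 : ∀ b ∈ (Finset.univ : Finset (Fin m → Bool)),
        (∫ ω in A ∩ C b, (S m ω : ℝ) ∂ℙ) =
        (if CPW.good b then ((CPW.tot b : ℤ) : ℝ) * (1/2:ℝ)^m else 0) := by
      intro b _
      rw [hAC b]
      split_ifs with hg
      · rw [setIntegral_congr_fun (hCmeas b) (fun ω hω => hval b ω hω),
          setIntegral_const, measureReal_def, hprob b]
        rw [smul_eq_mul, mul_comm]
        congr 1
        rw [ENNReal.toReal_pow]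
        norm_num
      · simp
    rw [Finset.sum_congr rfl h2, ← Finset.sum_filter, ← Finset.sum_mul]
    have h3 : (∑ b ∈ Finset.univ.filter (CPW.good (m := m)), ((CPW.tot b : ℤ) : ℝ)) =
        (2:ℝ)^(m-1) := by
      rw [← Int.cast_sum, CPW.sum_tot_good m hm1]
      push_cast
      ring
    rw [h3]
  -- final computation
  have hGval : (CPW.G m : ℝ) = (((m-1).choose (m/2) : ℕ) : ℝ) := by
    have h1 := CPW.G_eq n
    have h2 : m - 1 = n := by omega
    rw [h2, hmdef]
    exact_mod_cast h1
  have hGpos : (0:ℝ) < (CPW.G m : ℝ) := by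
    rw [hGval]
    have : 0 < (m-1).choose (m/2) := Nat.choose_pos (by omega)
    exact_mod_cast this
  have hden : (ℙ A).toReal = (CPW.G m : ℝ) * (1/2:ℝ)^m := by
    rw [hPA, ENNReal.toReal_mul, ENNReal.toReal_pow]
    norm_num
  rw [hIntReal, hden]
  have hcpos : (0:ℝ) < (1/2:ℝ)^m := by positivity
  rw [mul_div_mul_right _ _ (ne_of_gt hcpos)]
  rw [div_le_iff₀ hGpos]
  have hcb := CPW.comb_bound m hm2
  have hmr : ((n:ℝ) + 1) = (m:ℝ) := by
    rw [hmdef]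
    push_cast
    ring
  rw [hmr, hGval]
  calc (2:ℝ)^(m-1) ≤ 2 * Real.sqrt m * (((m-1).choose (m/2) : ℕ) : ℝ) := hcb
    _ = 2 * Real.sqrt m * (((m-1).choose (m/2) : ℕ) : ℝ) := rfl
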